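/- Let f ∈ F_∞ attain its minimum f⋆ at a point x⋆, and let X be the solution to the ODE Ẍ + (3/t)Ẋ + ∇f(X) = 0 with X(0) = x₀, Ẋ(0) = 0. Then for every t > 0, f(X(t)) − f⋆ ≤ 2‖x₀ − x⋆‖²/t². -/

import Mathlib

open Set Filter Topology

noncomputable section

abbrev E (n : ℕ) := EuclideanSpace ℝ (Fin n)

def MemFL (n : ℕ) (L : ℝ) (f : E n → ℝ) : Prop :=
  ConvexOn ℝ Set.univ f ∧ ContDiff ℝ 1 f ∧
    ∀ x y, ‖gradient f x - gradient f y‖ ≤ L * ‖x - y‖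

/-- `F_∞ = ∪_{L>0} F_L`. -/
def MemFInf (n : ℕ) (f : E n → ℝ) : Prop := ∃ L > 0, MemFL n L f

def NesterovSol (n : ℕ) (f : E n → ℝ) (x0 : E n) (X : ℝ → E n) : Prop :=
  X 0 = x0 ∧
  ContDiffOn ℝ 1 X (Set.Ici 0) ∧
  ContDiffOn ℝ 2 X (Set.Ioi 0) ∧
  derivWithin X (Set.Ici 0) 0 = 0 ∧
  ∀ t > (0:ℝ), deriv (deriv X) t + (3 / t) • deriv X t + gradient f (X t) = 0

/-- Gradient inequality for convex differentiable functions. -/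
lemma grad_ineq {n : ℕ} {f : E n → ℝ} (hconv : ConvexOn ℝ Set.univ f)
    (hdiff : Differentiable ℝ f) (x y : E n) :
    f x + inner ℝ (gradient f x) (y - x) ≤ f y := by
  rcases eq_or_ne y x with rfl | hne
  · simp
  · set φ : ℝ → ℝ := fun s => f (x + s • (y - x)) with hφ
    have hφconv : ConvexOn ℝ Set.univ φ := by
      have := hconv.comp_affineMap (AffineMap.lineMap x y : ℝ →ᵃ[ℝ] E n)
      convert this.subset (subset_univ _) convex_univ using 1
      rotate_left 4
      ext s
      simp [φ, AffineMap.lineMap_apply_module]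
      ring_nf
      congr 1
      module
      all_goals rfl
    have hγ : HasDerivAt (fun s : ℝ => x + s • (y - x)) (y - x) 0 := by
      simpa using ((hasDerivAt_id (0:ℝ)).smul_const (y - x)).const_add x
    have hφd : HasDerivAt φ (inner ℝ (gradient f x) (y - x)) 0 := by
      have h1 := ((hdiff (x + (0:ℝ) • (y - x))).hasGradientAt.hasFDerivAt).comp_hasDerivAt 0 hγ
      simp only [zero_smul, add_zero] at h1
      simp [InnerProductSpace.toDual_apply_apply] at h1 ⊢
      exact h1
    have := hφconv.le_slope_of_hasDerivAt (mem_univ (0:ℝ)) (mem_univ (1:ℝ)) one_pos hφd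
    rw [slope_def_field] at this
    simp only [φ, one_smul, zero_smul, add_zero] at this
    have h01 : x + (y - x) = y := by abel
    rw [h01] at this
    linarith [this]

/-- **Theorem 3.** For `f ∈ F_∞` minimized at `x⋆`, the solution of the Nesterov ODE
satisfies `f(X(t)) - f⋆ ≤ 2‖x₀ - x⋆‖²/t²` for every `t > 0`. -/
theorem nesterov_ode_rate (n : ℕ) (f : E n → ℝ) (hf : MemFInf n f)
    (xstar : E n) (hmin : IsMinOn f Set.univ xstar)
    (x0 : E n) (X : ℝ → E n) (hX : NesterovSol n f x0 X) :
    ∀ t > (0:ℝ), f (X t) - f xstar ≤ 2 * ‖x0 - xstar‖ ^ 2 / t ^ 2 := by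
  obtain ⟨L, hL, hconv, hC1f, _⟩ := hf
  obtain ⟨hX0, hXC1, hXC2, hd0, hode⟩ := hX
  have hdiff : Differentiable ℝ f := hC1f.differentiable one_ne_zero
  set Y : ℝ → E n := deriv X with hY
  set Z : ℝ → E n := deriv Y with hZdef
  set g : ℝ → E n := fun t => gradient f (X t) with hg
  set u : ℝ → E n := fun t => X t + (t/2) • Y t - xstar with hu
  set En : ℝ → ℝ := fun t => t^2 * (f (X t) - f xstar) + 2 * (inner ℝ (u t) (u t) : ℝ)
    with hEn
  -- derivatives on Ioi 0
  have hXdiff : ∀ t ∈ Ioi (0:ℝ), HasDerivAt X (Y t) t := fun t ht =>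
    ((hXC2.differentiableOn (by norm_num)).differentiableAt (Ioi_mem_nhds ht)).hasDerivAt
  have hYC1 : ContDiffOn ℝ 1 Y (Ioi 0) := by
    exact hXC2.deriv_of_isOpen isOpen_Ioi (by norm_num)
  have hYdiff : ∀ t ∈ Ioi (0:ℝ), HasDerivAt Y (Z t) t := fun t ht =>
    ((hYC1.differentiableOn one_ne_zero).differentiableAt (Ioi_mem_nhds ht)).hasDerivAt
  -- derivative of u
  have hudiff : ∀ t ∈ Ioi (0:ℝ), HasDerivAt u (-((t/2) • g t)) t := by
    intro t ht
    have ht0 : (0:ℝ) < t := ht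
    have h1 : HasDerivAt (fun s : ℝ => s/2) ((1:ℝ)/2) t := by
      simpa using (hasDerivAt_id t).div_const 2
    have h2 : HasDerivAt (fun s : ℝ => (s/2) • Y s) ((t/2) • Z t + ((1:ℝ)/2) • Y t) t :=
      h1.smul (hYdiff t ht)
    have h3 : HasDerivAt u (Y t + ((t/2) • Z t + ((1:ℝ)/2) • Y t)) t :=
      ((hXdiff t ht).add h2).sub_const xstar
    have hZ : Z t = -((3/t) • Y t + g t) := by
      have h := hode t ht0
      rw [add_assoc, add_eq_zero_iff_eq_neg] at h
      exact h
    convert h3 using 1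
    rw [hZ]
    have htne : t ≠ 0 := ne_of_gt ht0
    match_scalars <;> (push_cast; field_simp) <;> ring
  -- derivative of f ∘ X
  have hfXdiff : ∀ t ∈ Ioi (0:ℝ), HasDerivAt (fun s => f (X s)) (inner ℝ (g t) (Y t) : ℝ) t := by
    intro t ht
    have h1 := ((hdiff (X t)).hasGradientAt.hasFDerivAt).comp_hasDerivAt t (hXdiff t ht)
    simp [InnerProductSpace.toDual_apply_apply, g] at h1 ⊢
    exact h1
  -- derivative of En
  have hEdiff : ∀ t ∈ Ioi (0:ℝ), HasDerivAt En
      (2*t*((f (X t) - f xstar) - (inner ℝ (X t - xstar) (g t) : ℝ))) t := by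
    intro t ht
    have ht0 : (0:ℝ) < t := ht
    have p1 : HasDerivAt (fun s : ℝ => s^2 * (f (X s) - f xstar))
        ((2*t) * (f (X t) - f xstar) + t^2 * (inner ℝ (g t) (Y t) : ℝ)) t := by
      have := (hasDerivAt_pow 2 t).mul ((hfXdiff t ht).sub_const (f xstar))
      simp [pow_one] at this
      exact this
    have p2 : HasDerivAt (fun s : ℝ => 2 * (inner ℝ (u s) (u s) : ℝ))
        (2 * ((inner ℝ (u t) (-((t/2) • g t)) : ℝ) + (inner ℝ (-((t/2) • g t)) (u t) : ℝ))) t := by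
      exact (HasDerivAt.inner ℝ (hudiff t ht) (hudiff t ht)).const_mul 2
    have := p1.add p2
    refine this.congr_deriv ?_
    have e1 : (inner ℝ (u t) (-((t/2) • g t)) : ℝ) = -(t/2) * inner ℝ (u t) (g t) := by
      rw [inner_neg_right, real_inner_smul_right]; ring
    have e2 : (inner ℝ (-((t/2) • g t)) (u t) : ℝ) = -(t/2) * inner ℝ (u t) (g t) := by
      rw [inner_neg_left, real_inner_smul_left, real_inner_comm]; ring
    have e3 : (inner ℝ (u t) (g t) : ℝ)
        = inner ℝ (X t - xstar) (g t) + (t/2) * inner ℝ (Y t) (g t) := by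
      have : u t = (X t - xstar) + (t/2) • Y t := by rw [hu]; abel
      rw [this, inner_add_left, real_inner_smul_left]
    rw [e1, e2, e3, real_inner_comm (g t) (Y t)]
    ring
  -- E' ≤ 0
  have hderiv_nonpos : ∀ t ∈ Ioi (0:ℝ), deriv En t ≤ 0 := by
    intro t ht
    rw [(hEdiff t ht).deriv]
    have key : f (X t) - f xstar - (inner ℝ (X t - xstar) (g t) : ℝ) ≤ 0 := by
      have h := grad_ineq hconv hdiff (X t) xstar
      have hx : (inner ℝ (g t) (xstar - X t) : ℝ) = -(inner ℝ (X t - xstar) (g t) : ℝ) := by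
        rw [real_inner_comm, ← inner_neg_left, neg_sub]
      rw [hx] at h
      linarith
    have ht0 : (0:ℝ) < t := ht
    nlinarith
  -- En is antitone on Ioi 0
  have hanti : AntitoneOn En (Ioi 0) := by
    apply antitoneOn_of_deriv_nonpos (convex_Ioi 0)
    · intro t ht
      exact ((hEdiff t ht).continuousAt).continuousWithinAt
    · intro t ht
      rw [interior_Ioi] at ht
      exact (hEdiff t ht).differentiableAt.differentiableWithinAt
    · intro t ht
      rw [interior_Ioi] at ht
      exact hderiv_nonpos t ht
  -- limit of En at 0+
  have hXcont : Tendsto X (𝓝[>] (0:ℝ)) (𝓝 x0) := by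
    have := (hXC1.continuousOn.continuousWithinAt (self_mem_Ici : (0:ℝ) ∈ Ici 0))
    rw [ContinuousWithinAt, hX0] at this
    exact this.mono_left (nhdsWithin_mono 0 Ioi_subset_Ici_self)
  have hYlim : Tendsto Y (𝓝[>] (0:ℝ)) (𝓝 0) := by
    have hdW : ContinuousOn (derivWithin X (Ici 0)) (Ici 0) :=
      hXC1.continuousOn_derivWithin (uniqueDiffOn_Ici 0) le_rfl
    have h1 : Tendsto (derivWithin X (Ici 0)) (𝓝[>] (0:ℝ)) (𝓝 0) := by
      have := hdW.continuousWithinAt (self_mem_Ici : (0:ℝ) ∈ Ici 0)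
      rw [ContinuousWithinAt, hd0] at this
      exact this.mono_left (nhdsWithin_mono 0 Ioi_subset_Ici_self)
    apply h1.congr'
    filter_upwards [self_mem_nhdsWithin] with t ht
    exact derivWithin_of_mem_nhds (Ici_mem_nhds ht)
  have hulim : Tendsto u (𝓝[>] (0:ℝ)) (𝓝 (x0 - xstar)) := by
    have hsc : Tendsto (fun t : ℝ => t/2) (𝓝[>] (0:ℝ)) (𝓝 0) := by
      have : Tendsto (fun t : ℝ => t/2) (𝓝 (0:ℝ)) (𝓝 (0/2)) :=
        (continuous_id.div_const 2).tendsto 0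
      simpa using this.mono_left nhdsWithin_le_nhds
    have h2 : Tendsto (fun t => (t/2) • Y t) (𝓝[>] (0:ℝ)) (𝓝 ((0:ℝ) • (0:E n))) :=
      hsc.smul hYlim
    simp only [zero_smul] at h2
    have := (hXcont.add h2).sub_const xstar
    simpa using this
  have hElim : Tendsto En (𝓝[>] (0:ℝ)) (𝓝 (2 * ‖x0 - xstar‖^2)) := by
    have ht2 : Tendsto (fun t : ℝ => t^2) (𝓝[>] (0:ℝ)) (𝓝 0) := by
      have : Tendsto (fun t : ℝ => t^2) (𝓝 (0:ℝ)) (𝓝 ((0:ℝ)^2)) :=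
        (continuous_pow 2).tendsto 0
      simpa using this.mono_left nhdsWithin_le_nhds
    have hfX : Tendsto (fun t => f (X t) - f xstar) (𝓝[>] (0:ℝ)) (𝓝 (f x0 - f xstar)) :=
      ((hdiff.continuous.tendsto x0).comp hXcont).sub_const (f xstar)
    have h1 : Tendsto (fun t => t^2 * (f (X t) - f xstar)) (𝓝[>] (0:ℝ)) (𝓝 0) := by
      have := ht2.mul hfX
      simpa using this
    have h2 : Tendsto (fun t => 2 * (inner ℝ (u t) (u t) : ℝ)) (𝓝[>] (0:ℝ))
        (𝓝 (2 * (inner ℝ (x0 - xstar) (x0 - xstar) : ℝ))) :=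
      (hulim.inner hulim).const_mul 2
    have := h1.add h2
    rw [real_inner_self_eq_norm_sq] at this
    rw [hEn]
    simpa using this
  -- conclude
  intro t ht
  have hEt : En t ≤ 2 * ‖x0 - xstar‖^2 := by
    refine ge_of_tendsto hElim ?_
    filter_upwards [Ioo_mem_nhdsGT_of_mem (Set.left_mem_Ico.2 ht)] with s hs
    exact hanti hs.1 ht hs.2.le
  have hinner : (0:ℝ) ≤ 2 * (inner ℝ (u t) (u t) : ℝ) := by
    have := real_inner_self_nonneg (x := u t)
    linarith
  have h1 : t^2 * (f (X t) - f xstar) ≤ 2 * ‖x0 - xstar‖^2 := by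
    have : t^2 * (f (X t) - f xstar) ≤ En t := by rw [hEn]; dsimp only; linarith
    linarith
  have ht2 : (0:ℝ) < t^2 := by positivity
  rw [div_eq_mul_inv] at *
  calc f (X t) - f xstar = (t^2 * (f (X t) - f xstar)) * (t^2)⁻¹ := by
        field_simp
    _ ≤ (2 * ‖x0 - xstar‖^2) * (t^2)⁻¹ := by
        apply mul_le_mul_of_nonneg_right h1 (by positivity)
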